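/- Let G be a finite connected W_p graph (p a positive integer) with independence number α, and write I(G;x) = Σ_{k=0}^{α} s_k x^k for its independence polynomial. Then p·(α − k)·s_k ≤ (k+1)·s_{k+1} for all 1 ≤ k ≤ α − 1. -/

import Mathlib

namespace WpGraphs

variable {V : Type*}

/-- `S` is an independent set of `G`: its vertices are pairwise non-adjacent. -/
def IsIndepSet (G : SimpleGraph V) (S : Set V) : Prop :=
  S.Pairwise fun u v => ¬ G.Adj u v

/-- The independence number `α(G)`: the cardinality of a largest independent set. -/
noncomputable def indepNum (G : SimpleGraph V) : ℕ :=
  sSup {n : ℕ | ∃ S : Set V, IsIndepSet G S ∧ S.ncard = n}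

/-- A maximum independent set: an independent set of cardinality `α(G)`. -/
def IsMaxIndepSet (G : SimpleGraph V) (S : Set V) : Prop :=
  IsIndepSet G S ∧ S.ncard = indepNum G

/-- A maximal independent set: an independent set that cannot be extended. -/
def IsMaximalIndepSet (G : SimpleGraph V) (S : Set V) : Prop :=
  IsIndepSet G S ∧ ∀ T : Set V, IsIndepSet G T → S ⊆ T → S = T

/-- `G` is a `W_p` graph: `n(G) ≥ p` and every `p` pairwise disjoint independent sets
are contained in `p` pairwise disjoint maximum independent sets. -/
def IsWp (G : SimpleGraph V) (p : ℕ) : Prop :=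
  p ≤ Nat.card V ∧
    ∀ A : Fin p → Set V, (∀ i, IsIndepSet G (A i)) →
      (Pairwise fun i j => Disjoint (A i) (A j)) →
      ∃ S : Fin p → Set V, (∀ i, IsMaxIndepSet G (S i)) ∧
        (Pairwise fun i j => Disjoint (S i) (S j)) ∧ ∀ i, A i ⊆ S i

/-- The neighborhood `N_G(S)` of a set of vertices `S`. -/
def setNbhd (G : SimpleGraph V) (S : Set V) : Set V :=
  {v | v ∉ S ∧ ∃ u ∈ S, G.Adj u v}

/-- `G` is `λ`-quasi-regularizable: `λ·|S| ≤ |N_G(S)|` for every independent set `S`. -/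
def QuasiReg (G : SimpleGraph V) (lam : ℝ) : Prop :=
  ∀ S : Set V, IsIndepSet G S → lam * S.ncard ≤ ((setNbhd G S).ncard : ℝ)

/-- `s_k(G)`: the number of independent sets of cardinality `k` in `G`
(the `k`-th coefficient of the independence polynomial). -/
noncomputable def indepCount (G : SimpleGraph V) (k : ℕ) : ℕ :=
  {S : Set V | IsIndepSet G S ∧ S.ncard = k}.ncard

/-- The independence polynomial of `G` is log-concave:
`s_k² ≥ s_{k-1}·s_{k+1}` for all `1 ≤ k ≤ α(G) - 1`. -/
def IndepLogConcave (G : SimpleGraph V) : Prop :=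
  ∀ k : ℕ, 1 ≤ k → k + 1 ≤ indepNum G →
    indepCount G (k - 1) * indepCount G (k + 1) ≤ indepCount G k ^ 2

/-- The vertex set of the localization `G_A = G − N_G[A]`:
all vertices outside `A` having no neighbor in `A`. -/
def locSet (G : SimpleGraph V) (A : Set V) : Set V :=
  {v | v ∉ A ∧ ∀ u ∈ A, ¬ G.Adj u v}

/-- `G` is well-covered: all maximal independent sets have the same size. -/
def IsWellCovered (G : SimpleGraph V) : Prop :=
  ∀ S T : Set V, IsMaximalIndepSet G S → IsMaximalIndepSet G T → S.ncard = T.ncard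

/-- `G` is very well-covered: well-covered, no isolated vertices, and `n(G) = 2·α(G)`. -/
def IsVeryWellCovered (G : SimpleGraph V) : Prop :=
  IsWellCovered G ∧ (∀ v : V, ∃ w : V, G.Adj v w) ∧ Nat.card V = 2 * indepNum G

/-- The clique corona `G∘𝓗` where `𝓗 = {K_{p v} : v ∈ V(G)}`: each vertex `v` of `G`
is joined to all vertices of its own copy of the complete graph `K_{p v}`. -/
def cliqueCorona (G : SimpleGraph V) (p : V → ℕ) :
    SimpleGraph (V ⊕ Σ v : V, Fin (p v)) :=
  SimpleGraph.fromRel fun a b =>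
    match a, b with
    | .inl u, .inl v => G.Adj u v
    | .inl u, .inr ⟨v, _⟩ => u = v
    | .inr ⟨u, _⟩, .inr ⟨v, _⟩ => u = v
    | .inr _, .inl _ => False

-- helpers
lemma indep_mono {G : SimpleGraph V} {S T : Set V} (h : IsIndepSet G S) (hTS : T ⊆ S) :
    IsIndepSet G T := Set.Pairwise.mono hTS h

lemma indep_union {G : SimpleGraph V} {A B : Set V} (hA : IsIndepSet G A)
    (hB : IsIndepSet G B) (hBL : B ⊆ locSet G A) : IsIndepSet G (A ∪ B) := by
  intro u hu v hv hne
  rcases hu with hu | hu <;> rcases hv with hv | hv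
  · exact hA hu hv hne
  · exact (hBL hv).2 u hu
  · exact fun hadj => (hBL hu).2 v hv hadj.symm
  · exact hB hu hv hne

lemma indep_le_indepNum [Finite V] {G : SimpleGraph V} {S : Set V}
    (h : IsIndepSet G S) : S.ncard ≤ indepNum G := by
  refine le_csSup ⟨Nat.card V, ?_⟩ ⟨S, h, rfl⟩
  rintro n ⟨T, _, rfl⟩
  simpa [Set.ncard_univ] using Set.ncard_le_ncard (Set.subset_univ T) Set.finite_univ

lemma disjoint_locSet_left {G : SimpleGraph V} {A B : Set V} (hBL : B ⊆ locSet G A) :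
    Disjoint A B := by
  rw [Set.disjoint_left]
  intro x hxA hxB
  exact (hBL hxB).1 hxA

lemma sum_ncard_le_of_disjoint [Finite V] {p : ℕ} {L : Set V} (C : Fin p → Set V)
    (hsub : ∀ i, C i ⊆ L)
    (hdisj : Pairwise fun i j => Disjoint (C i) (C j)) :
    ∑ i, (C i).ncard ≤ L.ncard := by
  classical
  have hF : ∀ i : Fin p, (C i).Finite := fun i => Set.toFinite _
  have hL : L.Finite := Set.toFinite _
  calc ∑ i, (C i).ncard = ∑ i, ((hF i).toFinset).card := by
        refine Finset.sum_congr rfl fun i _ => ?_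
        exact Set.ncard_eq_toFinset_card _ (hF i)
    _ = (Finset.univ.biUnion fun i => (hF i).toFinset).card := by
        refine (Finset.card_biUnion ?_).symm
        intro i _ j _ hij
        exact (Set.Finite.disjoint_toFinset).mpr (hdisj hij)
    _ ≤ hL.toFinset.card := by
        refine Finset.card_le_card ?_
        intro x hx
        rw [Finset.mem_biUnion] at hx
        obtain ⟨i, _, hxi⟩ := hx
        rw [Set.Finite.mem_toFinset] at *
        exact hsub i hxi
    _ = L.ncard := (Set.ncard_eq_toFinset_card _ hL).symm

/-- Key lemma: in a `W_p` graph, every independent set `A` has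
`p·(α − |A|) ≤ |locSet G A|`. -/
lemma loc_lower [Finite V] {G : SimpleGraph V} {p : ℕ} (hp : 0 < p)
    (hWp : IsWp G p) {A : Set V} (hA : IsIndepSet G A) :
    p * (indepNum G - A.ncard) ≤ (locSet G A).ncard := by
  classical
  set L := locSet G A with hLdef
  set α := indepNum G with hαdef
  set k := A.ncard with hkdef
  set Valid : (Fin p → Set V) → Prop := fun C =>
    (∀ i, C i ⊆ L ∧ IsIndepSet G (C i)) ∧ (Pairwise fun i j => Disjoint (C i) (C j))
    with hValid
  set SS : Set ℕ := {n | ∃ C, Valid C ∧ ∑ i, (C i).ncard = n} with hSS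
  have hne : SS.Nonempty := by
    refine ⟨0, fun _ => ∅, ⟨fun i => ⟨Set.empty_subset _, fun x hx => absurd hx (Set.notMem_empty x)⟩,
      fun i j _ => disjoint_bot_left⟩, by simp⟩
  have hbdd : BddAbove SS := by
    refine ⟨L.ncard, ?_⟩
    rintro n ⟨C, hC, rfl⟩
    exact sum_ncard_le_of_disjoint C (fun i => (hC.1 i).1) hC.2
  obtain ⟨C, hC, hCsum⟩ := Nat.sSup_mem hne hbdd
  set M := sSup SS with hM
  -- each block has at least α - k vertices
  have hkey : ∀ j : Fin p, α - k ≤ (C j).ncard := by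
    intro j
    set z : Fin p := ⟨0, hp⟩ with hz
    set e : Fin p ≃ Fin p := Equiv.swap z j with he
    have hez : e z = j := Equiv.swap_apply_left z j
    set A' : Fin p → Set V := fun i => if i = z then A ∪ C j else C (e i) with hA'
    have hA'indep : ∀ i, IsIndepSet G (A' i) := by
      intro i
      by_cases hi : i = z
      · simp only [hA', hi, if_pos rfl]
        exact indep_union hA (hC.1 j).2 (hC.1 j).1
      · simp only [hA', if_neg hi]
        exact (hC.1 (e i)).2
    have hdisjAC : ∀ m : Fin p, Disjoint A (C m) := fun m =>
      disjoint_locSet_left (hC.1 m).1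
    have hA'disj : Pairwise fun i j' => Disjoint (A' i) (A' j') := by
      intro i i' hii'
      by_cases hi : i = z <;> by_cases hi' : i' = z
      · exact absurd (hi.trans hi'.symm) hii'
      · simp only [hA', hi, if_pos rfl, if_neg hi']
        exact Set.disjoint_union_left.mpr ⟨hdisjAC _,
          hC.2 fun h => hi' (e.injective (hez.trans h)).symm⟩
      · simp only [hA', hi', if_pos rfl, if_neg hi]
        exact (Set.disjoint_union_left.mpr ⟨hdisjAC _,
          hC.2 fun h => hi (e.injective (hez.trans h)).symm⟩).symm
      · simp only [hA', if_neg hi, if_neg hi']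
        exact hC.2 fun h => hii' (e.injective h)
    obtain ⟨T, hTmax, hTdisj, hTsub⟩ := hWp.2 A' hA'indep hA'disj
    set D : Fin p → Set V := fun m => T (e.symm m) ∩ L with hD
    have hDvalid : Valid D := by
      refine ⟨fun m => ⟨Set.inter_subset_right, indep_mono (hTmax _).1 Set.inter_subset_left⟩, ?_⟩
      intro m m' hmm'
      exact Set.disjoint_of_subset Set.inter_subset_left Set.inter_subset_left
        (hTdisj fun h => hmm' (e.symm.injective h))
    have hDC : ∀ m : Fin p, m ≠ j → C m ⊆ D m := by
      intro m hmj x hx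
      have hzm : e.symm m ≠ z := by
        intro h
        apply hmj
        rw [← hez, ← h, Equiv.apply_symm_apply]
      refine ⟨?_, (hC.1 m).1 hx⟩
      have := hTsub (e.symm m)
      simp only [hA', if_neg hzm, Equiv.apply_symm_apply] at this
      exact this hx
    -- D j = T z ∩ L = T z \ A, which has α - k elements
    have hAT : A ⊆ T (e.symm j) := by
      have := hTsub (e.symm j)
      rw [← hez, Equiv.symm_apply_apply] at this
      simp only [hA', if_pos rfl] at this
      rw [← hez, Equiv.symm_apply_apply]
      exact fun x hx => this (Or.inl hx)
    have hTz : T (e.symm j) ∩ L = T (e.symm j) \ A := by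
      ext v
      constructor
      · rintro ⟨hvT, hvL⟩
        exact ⟨hvT, hvL.1⟩
      · rintro ⟨hvT, hvA⟩
        refine ⟨hvT, hvA, fun u hu => ?_⟩
        exact (hTmax _).1 (hAT hu) hvT (fun h => hvA (h ▸ hu))
    have hDj : (D j).ncard = α - k := by
      show (T (e.symm j) ∩ L).ncard = α - k
      rw [hTz, Set.ncard_diff hAT (Set.toFinite _), (hTmax (e.symm j)).2]
    have hDle : ∑ m, (D m).ncard ≤ M := le_csSup hbdd ⟨D, hDvalid, rfl⟩
    have hCeq : (C j).ncard + ∑ m ∈ Finset.univ.erase j, (C m).ncard = M := by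
      rw [← hCsum]
      exact Finset.add_sum_erase _ (fun m => (C m).ncard) (Finset.mem_univ j)
    have hDeq : (D j).ncard + ∑ m ∈ Finset.univ.erase j, (D m).ncard = ∑ m, (D m).ncard :=
      Finset.add_sum_erase _ (fun m => (D m).ncard) (Finset.mem_univ j)
    have hCD : ∑ m ∈ Finset.univ.erase j, (C m).ncard ≤ ∑ m ∈ Finset.univ.erase j, (D m).ncard := by
      refine Finset.sum_le_sum fun m hm => ?_
      exact Set.ncard_le_ncard (hDC m (Finset.ne_of_mem_erase hm)) (Set.toFinite _)
    omega
  have hfinal : p * (α - k) ≤ ∑ j : Fin p, (C j).ncard := by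
    calc p * (α - k) = ∑ _j : Fin p, (α - k) := by
          rw [Finset.sum_const, Finset.card_univ, Fintype.card_fin, smul_eq_mul]
      _ ≤ ∑ j : Fin p, (C j).ncard := Finset.sum_le_sum fun j _ => hkey j
  exact hfinal.trans (sum_ncard_le_of_disjoint C (fun i => (hC.1 i).1) hC.2)

/-- If `G` is a finite connected `W_p` graph with independence number
`α`, then `p·(α − k)·s_k ≤ (k+1)·s_{k+1}` for all `1 ≤ k ≤ α − 1`. -/
theorem wp_coeff_ineq {V : Type*} [Finite V] (G : SimpleGraph V) (p : ℕ)
    (hp : 0 < p) (hconn : G.Connected) (hWp : IsWp G p) :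
    ∀ k : ℕ, 1 ≤ k → k + 1 ≤ indepNum G →
      p * (indepNum G - k) * indepCount G k ≤ (k + 1) * indepCount G (k + 1) := by
  intro k hk1 hk2
  classical
  haveI : Fintype V := Fintype.ofFinite V
  haveI : Fintype (Set V) := Fintype.ofFinite _
  set α := indepNum G with hα
  set SK : Finset (Set V) := Finset.univ.filter (fun S => IsIndepSet G S ∧ S.ncard = k) with hSK
  set SK1 : Finset (Set V) := Finset.univ.filter (fun S => IsIndepSet G S ∧ S.ncard = k + 1)
    with hSK1
  have hcountk : indepCount G k = SK.card := by
    rw [indepCount, Set.ncard_eq_toFinset_card _ (Set.toFinite _)]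
    congr 1
    ext S
    simp [hSK]
  have hcountk1 : indepCount G (k + 1) = SK1.card := by
    rw [indepCount, Set.ncard_eq_toFinset_card _ (Set.toFinite _)]
    congr 1
    ext S
    simp [hSK1]
  set F1 : Finset (Set V × V) :=
    Finset.univ.filter (fun q => IsIndepSet G q.1 ∧ q.1.ncard = k ∧ q.2 ∈ locSet G q.1) with hF1
  set F2 : Finset (Set V × V) :=
    Finset.univ.filter (fun q => IsIndepSet G q.1 ∧ q.1.ncard = k + 1 ∧ q.2 ∈ q.1) with hF2
  -- Step 1 : F1.card = F2.card via (A, v) ↦ (insert v A, v)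
  have hbij : F1.card = F2.card := by
    refine Finset.card_bij (fun q _ => (insert q.2 q.1, q.2)) ?_ ?_ ?_
    · intro q hq
      simp only [hF1, Finset.mem_filter, Finset.mem_univ, true_and] at hq
      obtain ⟨hind, hcard, hloc⟩ := hq
      obtain ⟨hvmem, hvadj⟩ := hloc
      simp only [hF2, Finset.mem_filter, Finset.mem_univ, true_and]
      refine ⟨?_, ?_, Set.mem_insert _ _⟩
      · intro x hx y hy hxy
        rcases Set.mem_insert_iff.1 hx with rfl | hx <;>
          rcases Set.mem_insert_iff.1 hy with rfl | hy
        · exact absurd rfl hxy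
        · exact fun hadj => hvadj y hy hadj.symm
        · exact hvadj x hx
        · exact hind hx hy hxy
      · rw [Set.ncard_insert_of_notMem hvmem (Set.toFinite _), hcard]
    · intro q1 h1 q2 h2 heq
      simp only [hF1, Finset.mem_filter, Finset.mem_univ, true_and] at h1 h2
      simp only [Prod.mk.injEq] at heq
      obtain ⟨hs, hv⟩ := heq
      have h11 : q1.1 = q2.1 := by
        have e1 : insert q1.2 q1.1 \ {q1.2} = q1.1 :=
          Set.insert_diff_self_of_notMem h1.2.2.1
        have e2 : insert q2.2 q2.1 \ {q2.2} = q2.1 :=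
          Set.insert_diff_self_of_notMem h2.2.2.1
        rw [← e1, ← e2, hs, hv]
      exact Prod.ext h11 hv
    · intro q hq
      simp only [hF2, Finset.mem_filter, Finset.mem_univ, true_and] at hq
      obtain ⟨hind, hcard, hmem⟩ := hq
      refine ⟨(q.1 \ {q.2}, q.2), ?_, ?_⟩
      · simp only [hF1, Finset.mem_filter, Finset.mem_univ, true_and]
        refine ⟨indep_mono hind Set.diff_subset, ?_, ?_, ?_⟩
        · rw [Set.ncard_diff_singleton_of_mem hmem, hcard]
          omega
        · simp
        · intro u hu
          exact hind hu.1 hmem hu.2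
      · have : insert q.2 (q.1 \ {q.2}) = q.1 := by
          rw [Set.insert_diff_singleton, Set.insert_eq_self.mpr hmem]
        exact Prod.ext this rfl
  -- Step 2 : F2.card = SK1.card * (k+1)
  have h2 : F2.card = SK1.card * (k + 1) := by
    rw [Finset.card_eq_sum_card_fiberwise (f := Prod.fst) (t := SK1) ?_]
    · rw [Finset.sum_congr rfl (g := fun _ => k + 1) ?_, Finset.sum_const, smul_eq_mul]
      intro B hB
      simp only [hSK1, Finset.mem_filter, Finset.mem_univ, true_and] at hB
      have himg : F2.filter (fun q => q.1 = B)
          = (Set.toFinite B).toFinset.image (fun v => (B, v)) := by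
        ext q
        simp only [hF2, Finset.mem_filter, Finset.mem_univ, true_and, Finset.mem_image,
          Set.Finite.mem_toFinset]
        constructor
        · rintro ⟨⟨hind, hc, hmem⟩, hq1⟩
          exact ⟨q.2, hq1 ▸ hmem, by rw [← hq1]⟩
        · rintro ⟨v, hv, rfl⟩
          exact ⟨⟨hB.1, hB.2, hv⟩, rfl⟩
      rw [himg, Finset.card_image_of_injective _ (fun a b h => (Prod.mk.injEq _ _ _ _ ▸ h).2),
        ← Set.ncard_eq_toFinset_card _ (Set.toFinite _), hB.2]
    · intro q hq
      simp only [hF2, Finset.mem_filter, Finset.mem_univ, true_and] at hq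
      simp only [hSK1, Finset.mem_filter, Finset.mem_univ, true_and]
      exact (Finset.mem_filter.mpr ⟨Finset.mem_univ q.1, (Finset.mem_filter.mp (hq : q ∈ F2)).2.1, (Finset.mem_filter.mp (hq : q ∈ F2)).2.2.1⟩ : q.1 ∈ SK1)
  -- Step 3 : SK.card * (p * (α - k)) ≤ F1.card
  have h3 : SK.card * (p * (α - k)) ≤ F1.card := by
    rw [Finset.card_eq_sum_card_fiberwise (f := Prod.fst) (t := SK) ?_]
    · have : ∀ A ∈ SK, p * (α - k) ≤ (F1.filter (fun q => q.1 = A)).card := by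
        intro A hA
        simp only [hSK, Finset.mem_filter, Finset.mem_univ, true_and] at hA
        have himg : F1.filter (fun q => q.1 = A)
            = (Set.toFinite (locSet G A)).toFinset.image (fun v => (A, v)) := by
          ext q
          simp only [hF1, Finset.mem_filter, Finset.mem_univ, true_and, Finset.mem_image,
            Set.Finite.mem_toFinset]
          constructor
          · rintro ⟨⟨hind, hc, hmem⟩, hq1⟩
            exact ⟨q.2, hq1 ▸ hmem, by rw [← hq1]⟩
          · rintro ⟨v, hv, rfl⟩
            exact ⟨⟨hA.1, hA.2, hv⟩, rfl⟩
        rw [himg, Finset.card_image_of_injective _ (fun a b h => (Prod.mk.injEq _ _ _ _ ▸ h).2),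
          ← Set.ncard_eq_toFinset_card _ (Set.toFinite _)]
        have := loc_lower hp hWp hA.1
        rwa [hA.2] at this
      have hle := Finset.card_nsmul_le_sum SK
        (fun A => (F1.filter (fun q => q.1 = A)).card) (p * (α - k)) this
      simpa [nsmul_eq_mul] using hle
    · intro q hq
      simp only [hF1, Finset.mem_filter, Finset.mem_univ, true_and] at hq
      simp only [hSK, Finset.mem_filter, Finset.mem_univ, true_and]
      exact (Finset.mem_filter.mpr ⟨Finset.mem_univ q.1, (Finset.mem_filter.mp (hq : q ∈ F1)).2.1, (Finset.mem_filter.mp (hq : q ∈ F1)).2.2.1⟩ : q.1 ∈ SK)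
  rw [hcountk, hcountk1]
  calc p * (α - k) * SK.card = SK.card * (p * (α - k)) := by ring
    _ ≤ F1.card := h3
    _ = F2.card := hbij
    _ = SK1.card * (k + 1) := h2
    _ = (k + 1) * SK1.card := by ring

end WpGraphs
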